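/- Let F ⊆ 2^[n] be shattering-extremal and let S be a maximal element of Sh(F), i.e. S ∈ Sh(F) and no proper superset of S belongs to Sh(F). Then S is uniquely strongly shattered by F: there is exactly one set I ⊆ [n] \ S such that {H ∪ I : H ⊆ S} ⊆ F. -/
import Mathlib


open scoped symmDiff

/-- `𝓕` shatters `S`: every subset of `S` is the trace of some member of `𝓕` on `S`. -/
def Shatters {n : ℕ} (𝓕 : Finset (Finset (Fin n))) (S : Finset (Fin n)) : Prop :=
  ∀ T ⊆ S, ∃ F ∈ 𝓕, F ∩ S = T

/-- `𝓕` strongly shatters `S`: there is `I ⊆ [n] \ S` with `{H ∪ I : H ⊆ S} ⊆ 𝓕`. -/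
def StronglyShatters {n : ℕ} (𝓕 : Finset (Finset (Fin n))) (S : Finset (Fin n)) : Prop :=
  ∃ I : Finset (Fin n), I ⊆ Sᶜ ∧ ∀ H ⊆ S, H ∪ I ∈ 𝓕

open Classical in
/-- The family of subsets of `[n]` shattered by `𝓕`. -/
noncomputable def Sh {n : ℕ} (𝓕 : Finset (Finset (Fin n))) : Finset (Finset (Fin n)) :=
  Finset.univ.filter (Shatters 𝓕)

open Classical in
/-- The family of subsets of `[n]` strongly shattered by `𝓕`. -/
noncomputable def st {n : ℕ} (𝓕 : Finset (Finset (Fin n))) : Finset (Finset (Fin n)) :=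
  Finset.univ.filter (StronglyShatters 𝓕)

/-- `𝓕` is shattering-extremal if it shatters exactly `|𝓕|` sets. -/
def Extremal {n : ℕ} (𝓕 : Finset (Finset (Fin n))) : Prop :=
  (Sh 𝓕).card = 𝓕.card

/-- The Vapnik–Chervonenkis dimension: the maximum cardinality of a shattered set. -/
noncomputable def dimVC {n : ℕ} (𝓕 : Finset (Finset (Fin n))) : ℕ :=
  (Sh 𝓕).sup Finset.card

variable {n : ℕ}

lemma mem_Sh' {𝓕 : Finset (Finset (Fin n))} {S : Finset (Fin n)} :
    S ∈ Sh 𝓕 ↔ Shatters 𝓕 S := by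
  classical
  simp [Sh]

lemma mem_st' {𝓕 : Finset (Finset (Fin n))} {S : Finset (Fin n)} :
    S ∈ st 𝓕 ↔ StronglyShatters 𝓕 S := by
  classical
  simp [st]

lemma sauer' (𝓕 : Finset (Finset (Fin n))) : 𝓕.card ≤ (Sh 𝓕).card := by
  classical
  have h : Sh 𝓕 = 𝓕.shatterer := by
    ext S
    simp only [mem_Sh', Finset.mem_shatterer]
    constructor
    · intro hs T hT
      obtain ⟨F, hF, hFS⟩ := hs T hT
      exact ⟨F, hF, by rw [Finset.inter_comm]; exact hFS⟩
    · intro hs T hT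
      obtain ⟨F, hF, hFS⟩ := hs hT
      exact ⟨F, hF, by rw [Finset.inter_comm]; exact hFS⟩
  rw [h]
  exact Finset.card_le_card_shatterer 𝓕

lemma Sh_mono' {𝓕 𝓖 : Finset (Finset (Fin n))} (h : 𝓕 ⊆ 𝓖) : Sh 𝓕 ⊆ Sh 𝓖 := by
  intro S hS
  rw [mem_Sh'] at *
  intro T hT
  obtain ⟨F, hF, e⟩ := hS T hT
  exact ⟨F, h hF, e⟩

lemma extremal_Sh_subset_st' (G : Finset (Fin n)) :
    ∀ 𝓕 : Finset (Finset (Fin n)), (∀ F ∈ 𝓕, F ⊆ G) → Extremal 𝓕 → Sh 𝓕 ⊆ st 𝓕 := by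
  classical
  induction G using Finset.strongInduction with
  | _ G IH =>
    intro 𝓕 hsub hext S hS
    have hSsh : Shatters 𝓕 S := mem_Sh'.mp hS
    -- S ⊆ G
    have hSG : S ⊆ G := by
      intro x hx
      obtain ⟨F, hF, hFS⟩ := hSsh {x} (Finset.singleton_subset_iff.mpr hx)
      have : x ∈ F := by
        have : x ∈ F ∩ S := by rw [hFS]; exact Finset.mem_singleton_self x
        exact (Finset.mem_inter.mp this).1
      exact hsub F hF this
    by_cases hex : ∃ a ∈ G, a ∉ S
    · obtain ⟨a, haG, haS⟩ := hex
      set 𝓕₀ : Finset (Finset (Fin n)) := 𝓕.filter (fun F => a ∉ F) with h𝓕₀d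
      set 𝓕₁ : Finset (Finset (Fin n)) :=
        (𝓕.filter (fun F => a ∈ F)).image (fun F => F.erase a) with h𝓕₁d
      have mem𝓕₀ : ∀ {F : Finset (Fin n)}, F ∈ 𝓕₀ ↔ F ∈ 𝓕 ∧ a ∉ F := by
        intro F; simp [h𝓕₀d]
      have mem𝓕₁ : ∀ {F' : Finset (Fin n)},
          F' ∈ 𝓕₁ ↔ ∃ F ∈ 𝓕, a ∈ F ∧ F.erase a = F' := by
        intro F'; simp only [h𝓕₁d, Finset.mem_image, Finset.mem_filter]
        constructor
        · rintro ⟨F, ⟨hF, haF⟩, rfl⟩; exact ⟨F, hF, haF, rfl⟩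
        · rintro ⟨F, hF, haF, rfl⟩; exact ⟨F, ⟨hF, haF⟩, rfl⟩
      -- members of 𝓕₁ avoid a
      have hnot1 : ∀ F' ∈ 𝓕₁, a ∉ F' := by
        intro F' hF'
        obtain ⟨F, _, _, rfl⟩ := mem𝓕₁.mp hF'
        exact Finset.notMem_erase a F
      -- cardinality split
      have card1 : (𝓕.filter (fun F => a ∈ F)).card = 𝓕₁.card := by
        rw [h𝓕₁d, Finset.card_image_of_injOn]
        intro F hF F' hF' hee
        have haF : a ∈ F := (Finset.mem_filter.mp hF).2
        have haF' : a ∈ F' := (Finset.mem_filter.mp hF').2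
        have hee' : F.erase a = F'.erase a := hee
        rw [← Finset.insert_erase haF, ← Finset.insert_erase haF', hee']
      have card_split : 𝓕.card = 𝓕₀.card + 𝓕₁.card := by
        rw [← card1, h𝓕₀d, add_comm]
        exact (Finset.card_filter_add_card_filter_not (p := fun F => a ∈ F)).symm
      -- members subsets of G.erase a
      have h0sub : ∀ F ∈ 𝓕₀, F ⊆ G.erase a := by
        intro F hF
        obtain ⟨hF, haF⟩ := mem𝓕₀.mp hF
        exact Finset.subset_erase.mpr ⟨hsub F hF, haF⟩
      have h1sub : ∀ F' ∈ 𝓕₁, F' ⊆ G.erase a := by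
        intro F' hF'
        obtain ⟨F, hF, _, rfl⟩ := mem𝓕₁.mp hF'
        exact Finset.erase_subset_erase a (hsub F hF)
      -- shattered sets of a family avoiding a avoid a
      have avoid : ∀ 𝓖 : Finset (Finset (Fin n)), (∀ F ∈ 𝓖, a ∉ F) →
          ∀ S' ∈ Sh 𝓖, a ∉ S' := by
        intro 𝓖 h𝓖 S' hS' ha
        obtain ⟨F, hF, e⟩ := (mem_Sh'.mp hS') {a} (Finset.singleton_subset_iff.mpr ha)
        have : a ∈ F := by
          have : a ∈ F ∩ S' := by rw [e]; exact Finset.mem_singleton_self a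
          exact (Finset.mem_inter.mp this).1
        exact h𝓖 F hF this
      have hnotmem0 : ∀ S' ∈ Sh 𝓕₀, a ∉ S' :=
        avoid 𝓕₀ (fun F hF => (mem𝓕₀.mp hF).2)
      have hnotmem1 : ∀ S' ∈ Sh 𝓕₁, a ∉ S' := avoid 𝓕₁ hnot1
      -- trace lemma
      have trace : ∀ (F S' : Finset (Fin n)), a ∉ S' → F.erase a ∩ S' = F ∩ S' := by
        intro F S' h
        rw [Finset.erase_inter, Finset.erase_eq_of_notMem]
        intro hmem
        exact h (Finset.mem_inter.mp hmem).2
      -- Sh 𝓕₀ ⊆ Sh 𝓕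
      have h0Sh : Sh 𝓕₀ ⊆ Sh 𝓕 := Sh_mono' (Finset.filter_subset _ _)
      -- Sh 𝓕₁ ⊆ Sh 𝓕
      have h1Sh : Sh 𝓕₁ ⊆ Sh 𝓕 := by
        intro S' hS'
        have haS' : a ∉ S' := hnotmem1 S' hS'
        rw [mem_Sh'] at *
        intro T hT
        obtain ⟨F', hF', e⟩ := hS' T hT
        obtain ⟨F, hF, haF, rfl⟩ := mem𝓕₁.mp hF'
        exact ⟨F, hF, by rw [← trace F S' haS']; exact e⟩
      -- split Sh 𝓕 by membership of a
      set P : Finset (Finset (Fin n)) := (Sh 𝓕).filter (fun S' => a ∈ S') with hPd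
      set Q : Finset (Finset (Fin n)) := (Sh 𝓕).filter (fun S' => a ∉ S') with hQd
      have hsplitSh : (Sh 𝓕).card = P.card + Q.card := by
        rw [hPd, hQd,
          Finset.card_filter_add_card_filter_not (p := fun S' => a ∈ S')]
      have hQsub : Sh 𝓕₀ ∪ Sh 𝓕₁ ⊆ Q := by
        intro S' hS'
        rw [Finset.mem_union] at hS'
        rcases hS' with h' | h'
        · exact Finset.mem_filter.mpr ⟨h0Sh h', hnotmem0 S' h'⟩
        · exact Finset.mem_filter.mpr ⟨h1Sh h', hnotmem1 S' h'⟩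
      -- insert lemma
      have hInsert : ∀ S', S' ∈ Sh 𝓕₀ → S' ∈ Sh 𝓕₁ → insert a S' ∈ Sh 𝓕 := by
        intro S' h0 h1
        have haS' : a ∉ S' := hnotmem0 S' h0
        rw [mem_Sh']
        intro T hT
        by_cases haT : a ∈ T
        · obtain ⟨F', hF', e⟩ := (mem_Sh'.mp h1) (T.erase a) (Finset.subset_insert_iff.mp hT)
          obtain ⟨F, hF, haF, rfl⟩ := mem𝓕₁.mp hF'
          refine ⟨F, hF, ?_⟩
          rw [Finset.inter_insert_of_mem haF, ← trace F S' haS', e,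
            Finset.insert_erase haT]
        · have hTS : T ⊆ S' := by
            intro x hx
            have := hT hx
            rw [Finset.mem_insert] at this
            rcases this with rfl | h
            · exact absurd hx haT
            · exact h
          obtain ⟨F, hF0, e⟩ := (mem_Sh'.mp h0) T hTS
          obtain ⟨hF, haF⟩ := mem𝓕₀.mp hF0
          exact ⟨F, hF, by rw [Finset.inter_insert_of_notMem haF, e]⟩
      -- erase lemma
      have hErase : ∀ S' ∈ Sh 𝓕, a ∈ S' →
          S'.erase a ∈ Sh 𝓕₀ ∧ S'.erase a ∈ Sh 𝓕₁ := by
        intro S' hS' haS'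
        have hsh := mem_Sh'.mp hS'
        constructor
        · rw [mem_Sh']
          intro T hT
          have haT : a ∉ T := fun h => Finset.notMem_erase a S' (hT h)
          obtain ⟨F, hF, e⟩ := hsh T (hT.trans (Finset.erase_subset a S'))
          have haF : a ∉ F := by
            intro h
            exact haT (e ▸ Finset.mem_inter.mpr ⟨h, haS'⟩)
          refine ⟨F, mem𝓕₀.mpr ⟨hF, haF⟩, ?_⟩
          rw [Finset.inter_erase, e, Finset.erase_eq_of_notMem haT]
        · rw [mem_Sh']
          intro T hT
          have haT : a ∉ T := fun h => Finset.notMem_erase a S' (hT h)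
          have hinT : insert a T ⊆ S' := by
            intro x hx
            rw [Finset.mem_insert] at hx
            rcases hx with rfl | hx
            · exact haS'
            · exact Finset.erase_subset a S' (hT hx)
          obtain ⟨F, hF, e⟩ := hsh (insert a T) hinT
          have haF : a ∈ F := by
            have : a ∈ F ∩ S' := by rw [e]; exact Finset.mem_insert_self a T
            exact (Finset.mem_inter.mp this).1
          refine ⟨F.erase a, mem𝓕₁.mpr ⟨F, hF, haF, rfl⟩, ?_⟩
          rw [Finset.erase_inter, Finset.inter_erase, e, Finset.erase_insert haT,
            Finset.erase_eq_of_notMem haT]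
      -- image of intersection inside P
      have hPimage : (Sh 𝓕₀ ∩ Sh 𝓕₁).image (insert a) ⊆ P := by
        intro S' hS'
        obtain ⟨S'', hS'', rfl⟩ := Finset.mem_image.mp hS'
        rw [Finset.mem_inter] at hS''
        exact Finset.mem_filter.mpr
          ⟨hInsert S'' hS''.1 hS''.2, Finset.mem_insert_self a S''⟩
      have hPimcard : ((Sh 𝓕₀ ∩ Sh 𝓕₁).image (insert a)).card
          = (Sh 𝓕₀ ∩ Sh 𝓕₁).card := by
        apply Finset.card_image_of_injOn
        intro x hx y hy he
        have hax : a ∉ x := hnotmem0 x (Finset.mem_inter.mp (Finset.mem_coe.mp hx)).1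
        have hay : a ∉ y := hnotmem0 y (Finset.mem_inter.mp (Finset.mem_coe.mp hy)).1
        have he' : insert a x = insert a y := he
        rw [← Finset.erase_insert hax, ← Finset.erase_insert hay, he']
      have hq : (Sh 𝓕₀ ∪ Sh 𝓕₁).card ≤ Q.card := Finset.card_le_card hQsub
      have hp : (Sh 𝓕₀ ∩ Sh 𝓕₁).card ≤ P.card :=
        hPimcard ▸ Finset.card_le_card hPimage
      have hui : (Sh 𝓕₀ ∪ Sh 𝓕₁).card + (Sh 𝓕₀ ∩ Sh 𝓕₁).card
          = (Sh 𝓕₀).card + (Sh 𝓕₁).card := Finset.card_union_add_card_inter _ _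
      have hs0 := sauer' 𝓕₀
      have hs1 := sauer' 𝓕₁
      have hextc : (Sh 𝓕).card = 𝓕.card := hext
      have hq' : Q.card = (Sh 𝓕₀ ∪ Sh 𝓕₁).card := by omega
      have hp' : P.card = (Sh 𝓕₀ ∩ Sh 𝓕₁).card := by omega
      have hex0 : Extremal 𝓕₀ := by
        show (Sh 𝓕₀).card = 𝓕₀.card
        omega
      have hex1 : Extremal 𝓕₁ := by
        show (Sh 𝓕₁).card = 𝓕₁.card
        omega
      -- Sh of the union sits inside Q
      have hShU : Sh (𝓕₀ ∪ 𝓕₁) ⊆ Q := by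
        intro S' hS'
        have haS' : a ∉ S' := by
          refine avoid (𝓕₀ ∪ 𝓕₁) ?_ S' hS'
          intro F hF
          rcases Finset.mem_union.mp hF with h' | h'
          · exact (mem𝓕₀.mp h').2
          · exact hnot1 F h'
        refine Finset.mem_filter.mpr ⟨?_, haS'⟩
        rw [mem_Sh']
        intro T hT
        obtain ⟨F', hF', e⟩ := (mem_Sh'.mp hS') T hT
        rcases Finset.mem_union.mp hF' with h' | h'
        · exact ⟨F', (mem𝓕₀.mp h').1, e⟩
        · obtain ⟨F, hF, haF, rfl⟩ := mem𝓕₁.mp h'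
          exact ⟨F, hF, by rw [← trace F S' haS']; exact e⟩
      have hUcard : (𝓕₀ ∪ 𝓕₁).card ≤ Q.card :=
        le_trans (sauer' _) (Finset.card_le_card hShU)
      have hfui : (𝓕₀ ∪ 𝓕₁).card + (𝓕₀ ∩ 𝓕₁).card = 𝓕₀.card + 𝓕₁.card :=
        Finset.card_union_add_card_inter _ _
      have hint_sub : Sh (𝓕₀ ∩ 𝓕₁) ⊆ Sh 𝓕₀ ∩ Sh 𝓕₁ := by
        intro S' hS'
        exact Finset.mem_inter.mpr
          ⟨Sh_mono' Finset.inter_subset_left hS', Sh_mono' Finset.inter_subset_right hS'⟩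
      have hsint := sauer' (𝓕₀ ∩ 𝓕₁)
      have hintcard : (Sh 𝓕₀ ∩ Sh 𝓕₁).card ≤ (Sh (𝓕₀ ∩ 𝓕₁)).card := by omega
      have hShInt_eq : Sh (𝓕₀ ∩ 𝓕₁) = Sh 𝓕₀ ∩ Sh 𝓕₁ :=
        Finset.eq_of_subset_of_card_le hint_sub hintcard
      have hexInt : Extremal (𝓕₀ ∩ 𝓕₁) := by
        show (Sh (𝓕₀ ∩ 𝓕₁)).card = (𝓕₀ ∩ 𝓕₁).card
        have := congrArg Finset.card hShInt_eq
        omega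
      have hGe : G.erase a ⊂ G := Finset.erase_ssubset haG
      -- now the two cases
      by_cases haSm : a ∈ S
      · obtain ⟨hE0, hE1⟩ := hErase S hS haSm
        have hSerase : S.erase a ∈ Sh (𝓕₀ ∩ 𝓕₁) := by
          rw [hShInt_eq]
          exact Finset.mem_inter.mpr ⟨hE0, hE1⟩
        have hIHapp := IH (G.erase a) hGe (𝓕₀ ∩ 𝓕₁)
          (fun F hF => h0sub F (Finset.mem_of_mem_inter_left hF)) hexInt hSerase
        obtain ⟨I, hIc, hcube⟩ := mem_st'.mp hIHapp
        have hIint : I ∈ 𝓕₀ ∩ 𝓕₁ := by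
          have := hcube ∅ (Finset.empty_subset _)
          rwa [Finset.empty_union] at this
        have haI : a ∉ I := (mem𝓕₀.mp (Finset.mem_of_mem_inter_left hIint)).2
        rw [mem_st']
        refine ⟨I, ?_, ?_⟩
        · intro x hx
          have hx1 : x ∈ (S.erase a)ᶜ := hIc hx
          rw [Finset.mem_compl] at hx1 ⊢
          intro hxS
          have hxa : x ≠ a := fun e => haI (e ▸ hx)
          exact hx1 (Finset.mem_erase.mpr ⟨hxa, hxS⟩)
        · intro H hH
          by_cases haH : a ∈ H
          · have hHe : H.erase a ⊆ S.erase a := Finset.erase_subset_erase a hH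
            have h1 : H.erase a ∪ I ∈ 𝓕₁ :=
              Finset.mem_of_mem_inter_right (hcube (H.erase a) hHe)
            obtain ⟨F, hF, haF, hFe⟩ := mem𝓕₁.mp h1
            have hFeq : F = H ∪ I := by
              rw [← Finset.insert_erase haF, hFe, ← Finset.insert_union,
                Finset.insert_erase haH]
            exact hFeq ▸ hF
          · have hHe : H ⊆ S.erase a := Finset.subset_erase.mpr ⟨hH, haH⟩
            exact (mem𝓕₀.mp (Finset.mem_of_mem_inter_left (hcube H hHe))).1
      · have hQeq : Sh 𝓕₀ ∪ Sh 𝓕₁ = Q :=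
          Finset.eq_of_subset_of_card_le hQsub hq'.le
        have hSQ : S ∈ Sh 𝓕₀ ∪ Sh 𝓕₁ := by
          rw [hQeq]
          exact Finset.mem_filter.mpr ⟨hS, haSm⟩
        rcases Finset.mem_union.mp hSQ with h' | h'
        · have hIHapp := IH (G.erase a) hGe 𝓕₀ h0sub hex0 h'
          obtain ⟨I, hIc, hcube⟩ := mem_st'.mp hIHapp
          rw [mem_st']
          exact ⟨I, hIc, fun H hH => (mem𝓕₀.mp (hcube H hH)).1⟩
        · have hIHapp := IH (G.erase a) hGe 𝓕₁ h1sub hex1 h'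
          obtain ⟨I, hIc, hcube⟩ := mem_st'.mp hIHapp
          rw [mem_st']
          refine ⟨insert a I, ?_, ?_⟩
          · intro x hx
            rcases Finset.mem_insert.mp hx with rfl | hx'
            · exact Finset.mem_compl.mpr haSm
            · exact hIc hx'
          · intro H hH
            obtain ⟨F, hF, haF, hFe⟩ := mem𝓕₁.mp (hcube H hH)
            have hFeq : F = H ∪ insert a I := by
              rw [← Finset.insert_erase haF, hFe, Finset.union_insert]
            exact hFeq ▸ hF
    · -- S = G, so 𝓕 = powerset of S
      push_neg at hex
      have hGS : G = S := Finset.Subset.antisymm hex hSG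
      rw [mem_st']
      refine ⟨∅, Finset.empty_subset _, fun H hH => ?_⟩
      obtain ⟨F, hF, hFS⟩ := hSsh H hH
      have hFsubS : F ⊆ S := hGS ▸ hsub F hF
      have : F ∩ S = F := Finset.inter_eq_left.mpr hFsubS
      rw [Finset.union_empty, ← hFS, this]
      exact hF


/-- A maximal shattered set of a shattering-extremal family is uniquely strongly
shattered. -/
theorem maximal_shattered_unique_witness (n : ℕ) (𝓕 : Finset (Finset (Fin n)))
    (h : Extremal 𝓕) (S : Finset (Fin n)) (hS : S ∈ Sh 𝓕)
    (hmax : ∀ S' : Finset (Fin n), S ⊂ S' → S' ∉ Sh 𝓕) :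
    ∃! I : Finset (Fin n), I ⊆ Sᶜ ∧ ∀ H ⊆ S, H ∪ I ∈ 𝓕 := by
  classical
  have hstS : S ∈ st 𝓕 :=
    extremal_Sh_subset_st' Finset.univ 𝓕 (fun F _ => Finset.subset_univ F) h hS
  obtain ⟨I, hIc, hIcube⟩ := mem_st'.mp hstS
  have key : ∀ I₁ I₂ : Finset (Fin n), I₁ ⊆ Sᶜ → I₂ ⊆ Sᶜ →
      (∀ H ⊆ S, H ∪ I₁ ∈ 𝓕) → (∀ H ⊆ S, H ∪ I₂ ∈ 𝓕) → I₂ ⊆ I₁ := by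
    intro I₁ I₂ h1c h2c h1 h2 x hx2
    by_contra hx1
    have hxS : x ∉ S := Finset.mem_compl.mp (h2c hx2)
    refine hmax (insert x S) (Finset.ssubset_insert hxS) ?_
    rw [mem_Sh']
    intro T hT
    have hd2 : I₂ ∩ S = ∅ := by
      rw [Finset.eq_empty_iff_forall_notMem]
      intro y hy
      rw [Finset.mem_inter] at hy
      exact Finset.mem_compl.mp (h2c hy.1) hy.2
    have hd1 : I₁ ∩ S = ∅ := by
      rw [Finset.eq_empty_iff_forall_notMem]
      intro y hy
      rw [Finset.mem_inter] at hy
      exact Finset.mem_compl.mp (h1c hy.1) hy.2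
    by_cases hxT : x ∈ T
    · have hTe : T.erase x ⊆ S := Finset.subset_insert_iff.mp hT
      refine ⟨T.erase x ∪ I₂, h2 (T.erase x) hTe, ?_⟩
      rw [Finset.union_inter_distrib_right, Finset.inter_insert_of_mem hx2, hd2,
        Finset.inter_eq_left.mpr (hTe.trans (Finset.subset_insert x S)),
        Finset.union_insert, Finset.union_empty, Finset.insert_erase hxT]
    · have hTS : T ⊆ S := by
        intro y hy
        rcases Finset.mem_insert.mp (hT hy) with rfl | hyS
        · exact absurd hy hxT
        · exact hyS
      refine ⟨T ∪ I₁, h1 T hTS, ?_⟩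
      rw [Finset.union_inter_distrib_right, Finset.inter_insert_of_notMem hx1, hd1,
        Finset.inter_eq_left.mpr (hTS.trans (Finset.subset_insert x S)),
        Finset.union_empty]
  refine ⟨I, ⟨hIc, hIcube⟩, ?_⟩
  rintro J ⟨hJc, hJcube⟩
  exact Finset.Subset.antisymm (key I J hIc hJc hIcube hJcube)
    (key J I hJc hIc hJcube hIcube)
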